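/- Let z < y be real numbers, m > 0, and let u : ℝ → ℝ be continuous on [z, y] and differentiable on (z, y) with u'(s) ≥ m for every s ∈ (z, y). Then ∫_z^y |u(s)| ds ≥ m (y − z)² / 8. -/
import Mathlib

open MeasureTheory Set intervalIntegral

/-- Quantitative lower bound: if `u` is continuous on `[z, y]`, differentiable on
`(z, y)` with `u' ≥ m > 0` there, then `∫_z^y |u| ≥ m (y − z)² / 8`. -/
theorem integral_abs_lower_bound_of_deriv_ge (z y m : ℝ) (hzy : z < y)
    (hm : 0 < m) (u : ℝ → ℝ)
    (hcont : ContinuousOn u (Icc z y))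
    (hdiff : ∀ s ∈ Ioo z y, DifferentiableAt ℝ u s)
    (hderiv : ∀ s ∈ Ioo z y, m ≤ deriv u s) :
    m * (y - z) ^ 2 / 8 ≤ ∫ s in z..y, |u s| := by
  set c : ℝ := (z + y) / 2 with hc
  have hzc : z ≤ c := by simp [hc]; linarith
  have hcy : c ≤ y := by simp [hc]; linarith
  have hint : IntervalIntegrable (fun s => |u s|) volume z y :=
    (by rw [intervalIntegrable_iff_integrableOn_Icc_of_le hzy.le]; exact hcont.abs.integrableOn_Icc)
  have hIoo : Ioo z y = interior (Icc z y) := (interior_Icc).symm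
  have hdiffOn : DifferentiableOn ℝ u (interior (Icc z y)) := by
    rw [← hIoo]; exact fun s hs => (hdiff s hs).differentiableWithinAt
  have key : ∀ᵉ (a ∈ Icc z y) (b ∈ Icc z y), a ≤ b → m * (b - a) ≤ u b - u a :=
    (convex_Icc z y).mul_sub_le_image_sub_of_le_deriv hcont hdiffOn
      (by rw [← hIoo]; exact hderiv)
  have hcmem : c ∈ Icc z y := ⟨hzc, hcy⟩
  have habs_nonneg : ∀ a b, a ≤ b → 0 ≤ ∫ s in a..b, |u s| := by
    intro a b hab
    apply intervalIntegral.integral_nonneg hab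
    intro s _; exact abs_nonneg _
  have hsplit : (∫ s in z..y, |u s|) = (∫ s in z..c, |u s|) + ∫ s in c..y, |u s| :=
    (intervalIntegral.integral_add_adjacent_intervals
      (hint.mono_set (by rw [uIcc_of_le hzy.le, uIcc_of_le hzc]; exact Icc_subset_Icc le_rfl hcy))
      (hint.mono_set (by rw [uIcc_of_le hzy.le, uIcc_of_le hcy]; exact Icc_subset_Icc hzc le_rfl))).symm
  have hquad : ∀ a b : ℝ, a ≤ b → (∫ s in a..b, m * (s - a)) = m * (b - a) ^ 2 / 2 := by
    intro a b hab
    rw [intervalIntegral.integral_const_mul]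
    have : (∫ s in a..b, (s - a)) = (b ^ 2 - a ^ 2) / 2 - a * (b - a) := by
      rw [intervalIntegral.integral_sub intervalIntegrable_id (intervalIntegrable_const),
        integral_id, intervalIntegral.integral_const, smul_eq_mul]
      ring
    rw [this]; ring
  rcases le_or_gt 0 (u c) with huc | huc
  · -- use [c, y]
    have hmono : (∫ s in c..y, m * (s - c)) ≤ ∫ s in c..y, |u s| := by
      apply intervalIntegral.integral_mono_on hcy
      · exact (continuous_const.mul (continuous_id.sub continuous_const)).intervalIntegrable _ _
      · exact hint.mono_set (by rw [uIcc_of_le hzy.le, uIcc_of_le hcy]; exact Icc_subset_Icc hzc le_rfl)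
      · intro s hs
        have hsm : s ∈ Icc z y := ⟨hzc.trans hs.1, hs.2⟩
        have := key c hcmem s hsm hs.1
        have h1 : m * (s - c) ≤ u s := by linarith
        exact h1.trans (le_abs_self _)
    have h1 := habs_nonneg z c hzc
    rw [hquad c y hcy] at hmono
    rw [hsplit]
    have : (y - c) = (y - z) / 2 := by rw [hc]; ring
    rw [this] at hmono
    nlinarith
  · -- use [z, c]
    have hmono : (∫ s in z..c, m * (c - s)) ≤ ∫ s in z..c, |u s| := by
      apply intervalIntegral.integral_mono_on hzc
      · exact (continuous_const.mul (continuous_const.sub continuous_id)).intervalIntegrable _ _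
      · exact hint.mono_set (by rw [uIcc_of_le hzy.le, uIcc_of_le hzc]; exact Icc_subset_Icc le_rfl hcy)
      · intro s hs
        have hsm : s ∈ Icc z y := ⟨hs.1, hs.2.trans hcy⟩
        have := key s hsm c hcmem hs.2
        have h1 : m * (c - s) ≤ -u s := by linarith
        calc m * (c - s) ≤ -u s := h1
          _ ≤ |u s| := neg_le_abs _
    have hq : (∫ s in z..c, m * (c - s)) = m * (c - z) ^ 2 / 2 := by
      rw [intervalIntegral.integral_const_mul]
      have : (∫ s in z..c, (c - s)) = c * (c - z) - (c ^ 2 - z ^ 2) / 2 := by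
        rw [intervalIntegral.integral_sub intervalIntegrable_const intervalIntegrable_id,
          integral_id, intervalIntegral.integral_const, smul_eq_mul]
        ring
      rw [this]; ring
    have h1 := habs_nonneg c y hcy
    rw [hq] at hmono
    rw [hsplit]
    have : (c - z) = (y - z) / 2 := by rw [hc]; ring
    rw [this] at hmono
    nlinarith
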